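/- Let $f$ be a nonnegative measurable function on $(0,\infty)$ and let $1<p<\infty$. Then $\int_0^{\infty}\left(\frac{1}{t}\int_0^t f(s)\,ds\right)^p \frac{dt}{t} \le \int_0^{\infty} f(t)^p \frac{dt}{t}$. -/

import Mathlib

open MeasureTheory Set
open scoped ENNReal

/-- Weighted Hardy inequality with respect to the measure `dt/t` on `(0,∞)`. -/
theorem weighted_hardy_inequality (f : ℝ → ℝ≥0∞) (hf : Measurable f) (p : ℝ) (hp : 1 < p) :
    ∫⁻ t in Ioi (0:ℝ), ((ENNReal.ofReal t)⁻¹ * ∫⁻ s in Ioo (0:ℝ) t, f s) ^ p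
        * (ENNReal.ofReal t)⁻¹
      ≤ ∫⁻ t in Ioi (0:ℝ), (f t) ^ p * (ENNReal.ofReal t)⁻¹ := by
  have hpq : p.HolderConjugate (p.conjExponent) := Real.HolderConjugate.conjExponent hp
  set q := p.conjExponent with hq
  have hp0 : (0:ℝ) < p := hpq.pos
  -- the weight
  set w : ℝ → ℝ≥0∞ := fun t => (ENNReal.ofReal t)⁻¹ * (ENNReal.ofReal t)⁻¹ with hw
  have hwmeas : Measurable w := (ENNReal.measurable_ofReal.inv).mul ENNReal.measurable_ofReal.inv
  have hfp : Measurable fun s => (f s) ^ p :=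
    ENNReal.continuous_rpow_const.measurable.comp hf
  -- Step 1: pointwise Hölder bound
  have key : ∀ t ∈ Ioi (0:ℝ),
      ((ENNReal.ofReal t)⁻¹ * ∫⁻ s in Ioo (0:ℝ) t, f s) ^ p * (ENNReal.ofReal t)⁻¹
        ≤ (∫⁻ s in Ioo (0:ℝ) t, (f s) ^ p) * w t := by
    intro t ht
    rw [mem_Ioi] at ht
    set x := ENNReal.ofReal t with hxdef
    have hx0 : x ≠ 0 := (ENNReal.ofReal_pos.2 ht).ne'
    have hxt : x ≠ ⊤ := ENNReal.ofReal_ne_top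
    set A := ∫⁻ s in Ioo (0:ℝ) t, (f s) ^ p with hA
    have holder : (∫⁻ s in Ioo (0:ℝ) t, f s) ≤ A ^ (1/p) * x ^ (1/q) := by
      have h1 := ENNReal.lintegral_mul_le_Lp_mul_Lq (volume.restrict (Ioo (0:ℝ) t)) hpq
        hf.aemeasurable (measurable_const (a := (1:ℝ≥0∞))).aemeasurable
      simpa [ENNReal.one_rpow, Real.volume_Ioo, sub_zero, hxdef] using h1
    have holderp : (∫⁻ s in Ioo (0:ℝ) t, f s) ^ p ≤ A * x ^ (p - 1) := by
      calc (∫⁻ s in Ioo (0:ℝ) t, f s) ^ p ≤ (A ^ (1/p) * x ^ (1/q)) ^ p :=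
            ENNReal.rpow_le_rpow holder hp0.le
        _ = A ^ ((1/p) * p) * x ^ ((1/q) * p) := by
            rw [ENNReal.mul_rpow_of_nonneg _ _ hp0.le, ← ENNReal.rpow_mul, ← ENNReal.rpow_mul]
        _ = A * x ^ (p - 1) := by
            rw [one_div_mul_cancel hp0.ne', ENNReal.rpow_one]
            congr 1
            rw [one_div, inv_mul_eq_div, hq, Real.conjExponent]
            field_simp
    calc (x⁻¹ * ∫⁻ s in Ioo (0:ℝ) t, f s) ^ p * x⁻¹
        = x⁻¹ ^ p * (∫⁻ s in Ioo (0:ℝ) t, f s) ^ p * x⁻¹ := by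
          rw [ENNReal.mul_rpow_of_nonneg _ _ hp0.le]
      _ ≤ x⁻¹ ^ p * (A * x ^ (p - 1)) * x⁻¹ := by
          gcongr
      _ = A * (x ^ (-p) * x ^ (p-1) * x ^ (-1:ℝ)) := by
          rw [← ENNReal.rpow_neg_one x, ← ENNReal.rpow_mul]
          ring_nf
      _ = A * w t := by
          rw [← ENNReal.rpow_add _ _ hx0 hxt, ← ENNReal.rpow_add _ _ hx0 hxt]
          have : -p + (p - 1) + (-1 : ℝ) = (-1) + (-1) := by ring
          rw [this, ENNReal.rpow_add _ _ hx0 hxt, ENNReal.rpow_neg_one, hw]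
  -- Step 2: integrate the pointwise bound
  have step2 : ∫⁻ t in Ioi (0:ℝ), ((ENNReal.ofReal t)⁻¹ * ∫⁻ s in Ioo (0:ℝ) t, f s) ^ p
        * (ENNReal.ofReal t)⁻¹
      ≤ ∫⁻ t in Ioi (0:ℝ), (∫⁻ s in Ioo (0:ℝ) t, (f s) ^ p) * w t := by
    have hmono : Monotone fun t => ∫⁻ s in Ioo (0:ℝ) t, (f s) ^ p := fun a b hab =>
      lintegral_mono_set (Ioo_subset_Ioo_right hab)
    exact setLIntegral_mono (hmono.measurable.mul hwmeas) key
  refine step2.trans ?_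
  -- Step 3: Tonelli
  -- two-variable function
  set g : ℝ → ℝ → ℝ≥0∞ := fun t s => (Ioi s).indicator w t * (f s) ^ p with hg
  have hgmeas : Measurable (Function.uncurry g) := by
    have : Function.uncurry g = fun x : ℝ × ℝ =>
        ({y : ℝ × ℝ | y.2 < y.1}.indicator (fun y => w y.1) x) * (f x.2) ^ p := by
      funext x
      simp only [Function.uncurry, hg]
      by_cases h : x.2 < x.1 <;>
        simp [Set.indicator_apply, h, Set.mem_Ioi]
    rw [this]
    exact ((hwmeas.comp measurable_fst).indicator
        (measurableSet_lt measurable_snd measurable_fst)).mul (hfp.comp measurable_snd)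
  have inner1 : ∀ t ∈ Ioi (0:ℝ),
      (∫⁻ s in Ioi (0:ℝ), g t s) = (∫⁻ s in Ioo (0:ℝ) t, (f s) ^ p) * w t := by
    intro t ht
    rw [mem_Ioi] at ht
    have : ∀ s : ℝ, g t s = (Iio t).indicator (fun s => (f s) ^ p * w t) s := by
      intro s
      by_cases h : s < t <;>
        simp [hg, Set.indicator_apply, h, Set.mem_Ioi, Set.mem_Iio, mul_comm]
    calc (∫⁻ s in Ioi (0:ℝ), g t s)
        = ∫⁻ s in Ioi (0:ℝ), (Iio t).indicator (fun s => (f s) ^ p * w t) s := by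
          simp_rw [this]
      _ = ∫⁻ s in Ioi (0:ℝ) ∩ Iio t, (f s) ^ p * w t := by
          rw [lintegral_indicator measurableSet_Iio, Measure.restrict_restrict measurableSet_Iio,
            Set.inter_comm]
      _ = (∫⁻ s in Ioo (0:ℝ) t, (f s) ^ p) * w t := by
          rw [Set.Ioi_inter_Iio, lintegral_mul_const _ hfp]
  have tonelli : (∫⁻ t in Ioi (0:ℝ), ∫⁻ s in Ioi (0:ℝ), g t s)
      = ∫⁻ s in Ioi (0:ℝ), ∫⁻ t in Ioi (0:ℝ), g t s :=
    lintegral_lintegral_swap hgmeas.aemeasurable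
  -- Step 4: the inner integral over t
  have inner2 : ∀ s ∈ Ioi (0:ℝ),
      (∫⁻ t in Ioi (0:ℝ), g t s) = (f s) ^ p * (ENNReal.ofReal s)⁻¹ := by
    intro s hs
    rw [mem_Ioi] at hs
    have h1 : (∫⁻ t in Ioi (0:ℝ), g t s)
        = (∫⁻ t in Ioi s, w t) * (f s) ^ p := by
      rw [hg]
      rw [lintegral_mul_const _ (hwmeas.indicator measurableSet_Ioi)]
      congr 1
      rw [lintegral_indicator measurableSet_Ioi, Measure.restrict_restrict measurableSet_Ioi]
      congr 1
      rw [Set.inter_eq_left.2 (Ioi_subset_Ioi hs.le)]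
    have h2 : (∫⁻ t in Ioi s, w t) = (ENNReal.ofReal s)⁻¹ := by
      have heq : ∀ t ∈ Ioi s, w t = ENNReal.ofReal (t ^ (-2:ℝ)) := by
        intro t ht
        rw [mem_Ioi] at ht
        have ht0 : 0 < t := hs.trans ht
        show (ENNReal.ofReal t)⁻¹ * (ENNReal.ofReal t)⁻¹ = _
        rw [← ENNReal.ofReal_inv_of_pos ht0, ← ENNReal.ofReal_mul (by positivity)]
        congr 1
        rw [show (-2:ℝ) = (-1) + (-1) by ring, Real.rpow_add ht0, Real.rpow_neg_one]
      rw [setLIntegral_congr_fun_ae measurableSet_Ioi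
        (Filter.Eventually.of_forall heq)]
      rw [← ofReal_integral_eq_lintegral_ofReal
        (integrableOn_Ioi_rpow_of_lt (by norm_num) hs)
        ((ae_restrict_iff' measurableSet_Ioi).2 (Filter.Eventually.of_forall
          fun t ht => Real.rpow_nonneg (hs.trans ht).le _))]
      rw [integral_Ioi_rpow_of_lt (by norm_num) hs]
      norm_num
      rw [Real.rpow_neg_one, ENNReal.ofReal_inv_of_pos hs]
    rw [h1, h2, mul_comm]
  calc ∫⁻ t in Ioi (0:ℝ), (∫⁻ s in Ioo (0:ℝ) t, (f s) ^ p) * w t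
      = ∫⁻ t in Ioi (0:ℝ), ∫⁻ s in Ioi (0:ℝ), g t s :=
        (setLIntegral_congr_fun_ae measurableSet_Ioi
          (Filter.Eventually.of_forall fun t ht => (inner1 t ht).symm))
    _ = ∫⁻ s in Ioi (0:ℝ), ∫⁻ t in Ioi (0:ℝ), g t s := tonelli
    _ = ∫⁻ s in Ioi (0:ℝ), (f s) ^ p * (ENNReal.ofReal s)⁻¹ :=
        setLIntegral_congr_fun_ae measurableSet_Ioi
          (Filter.Eventually.of_forall fun s hs => inner2 s hs)
    _ ≤ ∫⁻ t in Ioi (0:ℝ), (f t) ^ p * (ENNReal.ofReal t)⁻¹ := le_rfl
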